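/- Let S be a finite linearly ordered set and T ⊆ S with |T| = r. Then a set A ⊆ S is independent in the freedom matroid M_T(S) if and only if A ≥ T in the Gale order on the power set of S; consequently, the bases of M_T(S) are exactly the r-element subsets B of S with B ≥ T in the Gale order. -/

import Mathlib

open Matroid Set

/-- The Gale order on the power set of a finite linearly ordered set: for
`A = {a₁ < ⋯ < a_k}` and `B = {b₁ < ⋯ < b_r}`, `A ≤ B` iff `r ≤ k` and `aᵢ ≤ bᵢ`
for `1 ≤ i ≤ r`. -/
def galeLE {α : Type*} [LinearOrder α] (A B : Finset α) : Prop :=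
  B.card ≤ A.card ∧ ∀ (i : ℕ) (hA : i < A.card) (hB : i < B.card),
    A.orderEmbOfFin rfl ⟨i, hA⟩ ≤ B.orderEmbOfFin rfl ⟨i, hB⟩

/-- The flag `(T₀, …, T_r)` on a linearly ordered set determined by an `r`-element
subset `T = {t₁ < ⋯ < t_r}`: `T_r` is everything and `Tᵢ = { s : s < t_{i+1} }` for
`0 ≤ i ≤ r-1`. -/
def flagOf {α : Type*} [LinearOrder α] (T : Finset α) {r : ℕ} (hT : T.card = r)
    (i : ℕ) : Set α :=
  if h : i < r then {s : α | s < T.orderEmbOfFin hT ⟨i, h⟩} else Set.univ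

lemma key_count {α : Type*} [LinearOrder α] (A : Finset α) (t : α) (i : ℕ) :
    ((↑A : Set α) ∩ {s | s < t}).ncard ≤ i ↔
      ∀ h : i < A.card, t ≤ A.orderEmbOfFin rfl ⟨i, h⟩ := by
  have hset : ((↑A : Set α) ∩ {s | s < t}) = ↑(A.filter (· < t)) := by
    ext x; simp [Finset.mem_filter, and_comm]
  rw [hset, Set.ncard_coe_finset]
  set f := A.orderEmbOfFin rfl with hf
  constructor
  · intro hle h
    by_contra hlt
    push_neg at hlt
    have hsub : (Finset.Iic (⟨i, h⟩ : Fin A.card)).image f ⊆ A.filter (· < t) := by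
      intro x hx
      simp only [Finset.mem_image, Finset.mem_Iic, Finset.mem_filter] at hx ⊢
      obtain ⟨j, hj, rfl⟩ := hx
      exact ⟨A.orderEmbOfFin_mem rfl j, lt_of_le_of_lt (f.monotone hj) hlt⟩
    have hcard := Finset.card_le_card hsub
    rw [Finset.card_image_of_injective _ f.injective, Fin.card_Iic] at hcard
    simp only [Fin.val_mk] at hcard
    omega
  · intro hge
    rcases le_or_gt A.card i with h | h
    · exact le_trans (Finset.card_le_card (Finset.filter_subset _ _)) h
    · have hsub : A.filter (· < t) ⊆ (Finset.Iio (⟨i, h⟩ : Fin A.card)).image f := by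
        intro x hx
        simp only [Finset.mem_filter] at hx
        obtain ⟨j, rfl⟩ : ∃ j, f j = x := by
          have hr : x ∈ Set.range f := by
            rw [hf, A.range_orderEmbOfFin rfl]; exact_mod_cast hx.1
          exact hr
        simp only [Finset.mem_image, Finset.mem_Iio]
        refine ⟨j, ?_, rfl⟩
        by_contra hji
        push_neg at hji
        exact absurd hx.2 (not_lt.2 (le_trans (hge h) (f.monotone hji)))
      calc (A.filter (· < t)).card ≤ _ := Finset.card_le_card hsub
        _ ≤ (Finset.Iio (⟨i, h⟩ : Fin A.card)).card := Finset.card_image_le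
        _ ≤ i := by rw [Fin.card_Iio]

/-- Let `S` be a finite linearly ordered set and `T ⊆ S` with `|T| = r`.
A set `A ⊆ S` is independent in the freedom matroid `M_T(S)` iff `A ≥ T` in the Gale
order; consequently the bases of `M_T(S)` are exactly the `r`-element subsets `B`
with `B ≥ T` in the Gale order. -/
theorem freedom_matroid_indep_iff_gale {α : Type*} [Fintype α] [LinearOrder α]
    (T : Finset α) (r : ℕ) (hT : T.card = r)
    (M : Matroid α) (hE : M.E = Set.univ)
    (hInd : ∀ I : Set α, M.Indep I ↔ ∀ i ≤ r, (I ∩ flagOf T hT i).ncard ≤ i) :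
    (∀ A : Finset α, M.Indep ↑A ↔ galeLE T A) ∧
    (∀ B : Finset α, M.IsBase ↑B ↔ (B.card = r ∧ galeLE T B)) := by
  subst hT
  -- part 1
  have h1 : ∀ A : Finset α, M.Indep ↑A ↔ galeLE T A := by
    intro A
    rw [hInd]
    constructor
    · intro h
      have hcard : A.card ≤ T.card := by
        have := h T.card le_rfl
        rw [flagOf, dif_neg (lt_irrefl _), Set.inter_univ, Set.ncard_coe_finset] at this
        exact this
      refine ⟨hcard, fun i hiT hiA => ?_⟩
      have := h i (le_of_lt hiT)
      rw [flagOf, dif_pos hiT] at this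
      exact (key_count A _ i).1 this hiA
    · rintro ⟨hcard, hg⟩ i hi
      rcases lt_or_eq_of_le hi with hlt | rfl
      · rw [flagOf, dif_pos hlt]
        exact (key_count A _ i).2 (fun hA => hg i hlt hA)
      · rw [flagOf, dif_neg (lt_irrefl _), Set.inter_univ, Set.ncard_coe_finset]
        exact hcard
  refine ⟨h1, ?_⟩
  -- T is independent
  have hTind : M.Indep ↑T := (h1 T).2 ⟨le_rfl, fun i h1' h2' => le_refl _⟩
  -- every independent set has ncard ≤ r
  have hIndCard : ∀ I : Set α, M.Indep I → I.ncard ≤ T.card := by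
    intro I hI
    have := (hInd I).1 hI T.card le_rfl
    rwa [flagOf, dif_neg (lt_irrefl _), Set.inter_univ] at this
  -- every base has ncard = r
  have hBaseCard : ∀ B : Set α, M.IsBase B → B.ncard = T.card := by
    intro B hB
    obtain ⟨B', hB', hTB'⟩ := hTind.exists_isBase_superset
    have h1' : (↑T : Set α).ncard ≤ B'.ncard := Set.ncard_le_ncard hTB' (Set.toFinite _)
    rw [Set.ncard_coe_finset] at h1'
    have h2' : B'.ncard ≤ T.card := hIndCard B' hB'.indep
    have := hB.ncard_eq_ncard_of_isBase hB'
    omega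
  intro B
  constructor
  · intro hB
    have hc : B.card = T.card := by
      have := hBaseCard _ hB
      rwa [Set.ncard_coe_finset] at this
    exact ⟨hc, (h1 B).1 hB.indep⟩
  · rintro ⟨hc, hg⟩
    have hBind : M.Indep ↑B := (h1 B).2 hg
    obtain ⟨B', hB', hBB'⟩ := hBind.exists_isBase_superset
    have heq : (↑B : Set α) = B' := by
      apply Set.eq_of_subset_of_ncard_le hBB' _ (Set.toFinite _)
      rw [hBaseCard _ hB', Set.ncard_coe_finset, hc]
    rw [heq]; exact hB'
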